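/- Every quiver which is a non-oriented cycle and is not simply-laced (i.e. some edge has weight at least 2) is of infinite mutation type. -/

import Mathlib

open scoped Classical

/-- A quiver is encoded by its skew-symmetric exchange matrix. -/
def IsSkewQ {n : ℕ} (B : Matrix (Fin n) (Fin n) ℤ) : Prop :=
  ∀ i j, B j i = - B i j

/-- Fomin-Zelevinsky mutation of a skew-symmetric matrix at vertex `k`. -/
def mutate {n : ℕ} (B : Matrix (Fin n) (Fin n) ℤ) (k : Fin n) : Matrix (Fin n) (Fin n) ℤ :=
  Matrix.of fun i j =>
    if i = k ∨ j = k then - B i j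
    else B i j + Int.sign (B i k) * max (B i k * B k j) 0

def mutateList {n : ℕ} (B : Matrix (Fin n) (Fin n) ℤ) (l : List (Fin n)) :
    Matrix (Fin n) (Fin n) ℤ :=
  l.foldl mutate B

/-- `C` is obtained from `B` by a finite sequence of mutations followed by a
simultaneous relabeling of the index set. -/
def MutEquiv {n m : ℕ} (B : Matrix (Fin n) (Fin n) ℤ) (C : Matrix (Fin m) (Fin m) ℤ) : Prop :=
  ∃ (l : List (Fin n)) (σ : Fin m ≃ Fin n), C = (mutateList B l).submatrix ⇑σ ⇑σ

/-- Finite mutation type: the mutation class is finite. -/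
def FiniteMutationType {n : ℕ} (B : Matrix (Fin n) (Fin n) ℤ) : Prop :=
  {C : Matrix (Fin n) (Fin n) ℤ | MutEquiv B C}.Finite

/-- The underlying undirected graph of the quiver. -/
def quiverGraph {n : ℕ} (B : Matrix (Fin n) (Fin n) ℤ) : SimpleGraph (Fin n) where
  Adj i j := i ≠ j ∧ (B i j ≠ 0 ∨ B j i ≠ 0)
  symm := ⟨fun i j h => ⟨h.1.symm, h.2.symm⟩⟩
  loopless := ⟨fun i h => h.1 rfl⟩

def ConnectedQ {n : ℕ} (B : Matrix (Fin n) (Fin n) ℤ) : Prop :=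
  (quiverGraph B).Connected

def SimplyLaced {n : ℕ} (B : Matrix (Fin n) (Fin n) ℤ) : Prop :=
  ∀ i j, |B i j| ≤ 1

/-- The quiver (matrix) is a cycle: the vertices can be labeled by `ZMod m` so that
adjacency is exactly between consecutive labels. -/
def IsCycleMat {m : ℕ} (C : Matrix (Fin m) (Fin m) ℤ) : Prop :=
  3 ≤ m ∧ ∃ ρ : ZMod m ≃ Fin m, ∀ i j : ZMod m,
    C (ρ i) (ρ j) ≠ 0 ↔ (j = i + 1 ∨ i = j + 1)

/-- The quiver is an oriented cycle. -/
def IsOrientedCycleMat {m : ℕ} (C : Matrix (Fin m) (Fin m) ℤ) : Prop :=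
  3 ≤ m ∧ ∃ ρ : ZMod m ≃ Fin m,
    (∀ i j : ZMod m, C (ρ i) (ρ j) ≠ 0 ↔ (j = i + 1 ∨ i = j + 1)) ∧
    (∀ i : ZMod m, 0 < C (ρ i) (ρ (i + 1)))

def IsNonOrientedCycleMat {m : ℕ} (C : Matrix (Fin m) (Fin m) ℤ) : Prop :=
  IsCycleMat C ∧ ¬ IsOrientedCycleMat C

/-- A double edge: two vertices joined by an edge of weight 2. -/
def IsDoubleEdgeMat {m : ℕ} (C : Matrix (Fin m) (Fin m) ℤ) : Prop :=
  m = 2 ∧ ∃ i j : Fin m, i ≠ j ∧ (C i j = 2 ∨ C i j = -2)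

/-- The Dynkin tree D4: a center joined by single edges (arbitrarily oriented) to
three pairwise non-adjacent vertices. -/
def IsD4Mat {m : ℕ} (C : Matrix (Fin m) (Fin m) ℤ) : Prop :=
  m = 4 ∧ ∃ c : Fin m,
    (∀ i, i ≠ c → (C c i = 1 ∨ C c i = -1)) ∧
    (∀ i j, i ≠ c → j ≠ c → i ≠ j → C i j = 0)

/-- Two adjacent oriented simply-laced triangles sharing the edge `{c,d}`,
with `a`, `b` non-adjacent. -/
def IsTwoTrianglesMat {m : ℕ} (C : Matrix (Fin m) (Fin m) ℤ) : Prop :=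
  m = 4 ∧ ∃ a b c d : Fin m,
    a ≠ b ∧ a ≠ c ∧ a ≠ d ∧ b ≠ c ∧ b ≠ d ∧ c ≠ d ∧
    C a b = 0 ∧ C b a = 0 ∧
    C a c = 1 ∧ C c d = 1 ∧ C d a = 1 ∧ C b c = 1 ∧ C d b = 1

/-- Basic quivers: D4, two adjacent oriented triangles, or a simply-laced
oriented cycle with at least 4 vertices. -/
def IsBasicMat {m : ℕ} (C : Matrix (Fin m) (Fin m) ℤ) : Prop :=
  IsD4Mat C ∨ IsTwoTrianglesMat C ∨
    (4 ≤ m ∧ (∀ i j, |C i j| ≤ 1) ∧ IsOrientedCycleMat C)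

def HasBasicSubquiver {n : ℕ} (B : Matrix (Fin n) (Fin n) ℤ) : Prop :=
  ∃ (m : ℕ) (f : Fin m ↪ Fin n), IsBasicMat (B.submatrix ⇑f ⇑f)

/-- Build a skew-symmetric matrix from a list of weighted arrows. -/
def ofEdges (n : ℕ) (E : List (Fin n × Fin n × ℤ)) : Matrix (Fin n) (Fin n) ℤ :=
  Matrix.of fun i j =>
    E.foldl (fun acc e =>
      acc + (if e.1 = i ∧ e.2.1 = j then e.2.2 else 0)
          + (if e.1 = j ∧ e.2.1 = i then - e.2.2 else 0)) 0

def E6mat : Matrix (Fin 6) (Fin 6) ℤ :=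
  ofEdges 6 [(0,1,1),(1,2,1),(2,3,1),(3,4,1),(2,5,1)]

def E7mat : Matrix (Fin 7) (Fin 7) ℤ :=
  ofEdges 7 [(0,1,1),(1,2,1),(2,3,1),(3,4,1),(4,5,1),(2,6,1)]

def E8mat : Matrix (Fin 8) (Fin 8) ℤ :=
  ofEdges 8 [(0,1,1),(1,2,1),(2,3,1),(3,4,1),(4,5,1),(5,6,1),(2,7,1)]

def E6affMat : Matrix (Fin 7) (Fin 7) ℤ :=
  ofEdges 7 [(0,1,1),(1,2,1),(2,3,1),(3,4,1),(2,5,1),(5,6,1)]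

def E7affMat : Matrix (Fin 8) (Fin 8) ℤ :=
  ofEdges 8 [(0,1,1),(1,2,1),(2,3,1),(3,4,1),(4,5,1),(5,6,1),(3,7,1)]

def E8affMat : Matrix (Fin 9) (Fin 9) ℤ :=
  ofEdges 9 [(0,1,1),(1,2,1),(2,3,1),(3,4,1),(4,5,1),(5,6,1),(6,7,1),(2,8,1)]

/-- E6^(1,1): core b₁=0, b₂=1 (weight-2 arrow b₁→b₂), a₁=2, a₂=3, a₃=4 in oriented
triangles, with one extra path vertex attached at each aᵢ. -/
def E611Mat : Matrix (Fin 8) (Fin 8) ℤ :=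
  ofEdges 8 [(0,1,2),(2,0,1),(1,2,1),(3,0,1),(1,3,1),(4,0,1),(1,4,1),(2,5,1),(3,6,1),(4,7,1)]

def E711Mat : Matrix (Fin 9) (Fin 9) ℤ :=
  ofEdges 9 [(0,1,2),(2,0,1),(1,2,1),(3,0,1),(1,3,1),(4,0,1),(1,4,1),
             (2,5,1),(5,6,1),(4,7,1),(7,8,1)]

def E811Mat : Matrix (Fin 10) (Fin 10) ℤ :=
  ofEdges 10 [(0,1,2),(2,0,1),(1,2,1),(3,0,1),(1,3,1),(4,0,1),(1,4,1),
              (2,5,1),(4,6,1),(6,7,1),(7,8,1),(8,9,1)]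

/-- X6: c=0, a₁=1, a₂=2, b₁=3, b₂=4, d=5. -/
def X6mat : Matrix (Fin 6) (Fin 6) ℤ :=
  ofEdges 6 [(0,1,1),(2,0,1),(0,3,1),(4,0,1),(1,2,2),(3,4,2),(0,5,1)]

/-- X7: c=0, aᵢ=1,3,5, a′ᵢ=2,4,6. -/
def X7mat : Matrix (Fin 7) (Fin 7) ℤ :=
  ofEdges 7 [(0,1,1),(1,2,2),(2,0,1),(0,3,1),(3,4,2),(4,0,1),(0,5,1),(5,6,2),(6,0,1)]

/-- The kernel of B mod 2. -/
def Vbar0 {n : ℕ} (B : Matrix (Fin n) (Fin n) ℤ) : Submodule (ZMod 2) (Fin n → ZMod 2) :=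
  LinearMap.ker (Matrix.mulVecLin (B.map (fun x : ℤ => (x : ZMod 2))))

/-- A basic radical vector: a mod-2 radical vector whose support has exactly two
vertices or is a cycle. -/
def IsBasicRadical {n : ℕ} (B : Matrix (Fin n) (Fin n) ℤ) (u : Fin n → ZMod 2) : Prop :=
  u ∈ Vbar0 B ∧
    ({i | u i ≠ 0}.ncard = 2 ∨
      ∃ (m : ℕ) (f : Fin m ↪ Fin n),
        Set.range ⇑f = {i | u i ≠ 0} ∧ IsCycleMat (B.submatrix ⇑f ⇑f))

/-- The span of the basic radical vectors. -/
def Vbar00 {n : ℕ} (B : Matrix (Fin n) (Fin n) ℤ) : Submodule (ZMod 2) (Fin n → ZMod 2) :=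
  Submodule.span (ZMod 2) {u | IsBasicRadical B u}



/- ===== auxiliary development for stmt2 ===== -/

/- ============ auxiliary lemmas ============ -/

lemma mutateList_append {n : ℕ} (B : Matrix (Fin n) (Fin n) ℤ) (l l' : List (Fin n)) :
    mutateList B (l ++ l') = mutateList (mutateList B l) l' :=
  List.foldl_append

lemma mutEquiv_self {n : ℕ} (B : Matrix (Fin n) (Fin n) ℤ) (l : List (Fin n)) :
    MutEquiv B (mutateList B l) :=
  ⟨l, Equiv.refl _, by simp⟩

lemma fmt_mutateList {n : ℕ} {B : Matrix (Fin n) (Fin n) ℤ}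
    (h : FiniteMutationType B) (l : List (Fin n)) :
    FiniteMutationType (mutateList B l) := by
  apply h.subset
  rintro C ⟨l', σ, rfl⟩
  exact ⟨l ++ l', σ, by rw [mutateList_append]⟩

lemma fmt_mutate {n : ℕ} {B : Matrix (Fin n) (Fin n) ℤ}
    (h : FiniteMutationType B) (k : Fin n) :
    FiniteMutationType (mutate B k) :=
  fmt_mutateList h [k]

lemma mutate_submatrix {n m : ℕ} (B : Matrix (Fin n) (Fin n) ℤ) (f : Fin m → Fin n)
    (hf : Function.Injective f) (k : Fin m) :
    (mutate B (f k)).submatrix f f = mutate (B.submatrix f f) k := by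
  ext i j
  simp only [mutate, Matrix.submatrix_apply, Matrix.of_apply, hf.eq_iff]

lemma mutateList_submatrix {n m : ℕ} (B : Matrix (Fin n) (Fin n) ℤ) (f : Fin m → Fin n)
    (hf : Function.Injective f) (l : List (Fin m)) :
    (mutateList B (l.map f)).submatrix f f = mutateList (B.submatrix f f) l := by
  induction l generalizing B with
  | nil => rfl
  | cons a l ih =>
    simp only [List.map_cons, mutateList, List.foldl_cons]
    rw [← mutateList, ← mutateList, ih (mutate B (f a)), mutate_submatrix B f hf a]

lemma fmt_submatrix {n m : ℕ} {B : Matrix (Fin n) (Fin n) ℤ}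
    (h : FiniteMutationType B) (f : Fin m → Fin n) (hf : Function.Injective f) :
    FiniteMutationType (B.submatrix f f) := by
  classical
  have himg : {C : Matrix (Fin m) (Fin m) ℤ | MutEquiv (B.submatrix f f) C} ⊆
      (fun p : Matrix (Fin n) (Fin n) ℤ × (Fin m → Fin n) => p.1.submatrix p.2 p.2) ''
        ({C | MutEquiv B C} ×ˢ (Set.univ : Set (Fin m → Fin n))) := by
    rintro C ⟨l, σ, rfl⟩
    refine ⟨⟨mutateList B (l.map f), f ∘ σ⟩, ⟨mutEquiv_self B _, trivial⟩, ?_⟩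
    rw [← mutateList_submatrix B f hf l]
    simp [Matrix.submatrix_submatrix]
  exact ((h.prod (Set.finite_univ)).image _).subset himg

lemma mutate_neg {n : ℕ} (B : Matrix (Fin n) (Fin n) ℤ) (k : Fin n) :
    mutate (-B) k = - mutate B k := by
  ext i j
  simp only [mutate, Matrix.neg_apply, Matrix.of_apply]
  split_ifs with h
  · ring
  · rw [Int.sign_neg]
    rcases le_or_gt (B i k * B k j) 0 with h1 | h1
    · rw [max_eq_right h1, max_eq_right (by nlinarith : -B i k * -B k j ≤ 0)]
      ring
    · rw [max_eq_left h1.le, max_eq_left (by nlinarith : (0:ℤ) ≤ -B i k * -B k j)]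
      ring

lemma mutateList_neg {n : ℕ} (B : Matrix (Fin n) (Fin n) ℤ) (l : List (Fin n)) :
    mutateList (-B) l = - mutateList B l := by
  induction l generalizing B with
  | nil => rfl
  | cons a l ih =>
    simp only [mutateList, List.foldl_cons]
    rw [← mutateList, ← mutateList, mutate_neg, ih]

lemma fmt_neg {n : ℕ} {B : Matrix (Fin n) (Fin n) ℤ}
    (h : FiniteMutationType B) : FiniteMutationType (-B) := by
  have : {C : Matrix (Fin n) (Fin n) ℤ | MutEquiv (-B) C} ⊆
      (fun M : Matrix (Fin n) (Fin n) ℤ => -M) '' {C | MutEquiv B C} := by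
    rintro C ⟨l, σ, rfl⟩
    exact ⟨(mutateList B l).submatrix σ σ, ⟨l, σ, rfl⟩, by rw [mutateList_neg]; ext i j; simp⟩
  exact (h.image _).subset this

/- ================== rank 3 ================== -/

def T (x y z : ℤ) : Matrix (Fin 3) (Fin 3) ℤ := !![0, x, -z; -x, 0, y; z, -y, 0]

lemma negT (x y z : ℤ) : -(T x y z) = T (-x) (-y) (-z) := by
  ext i j; fin_cases i <;> fin_cases j <;> simp [T]

lemma rotT_eq (x y z : ℤ) :
    (T x y z).submatrix ![1,2,0] ![1,2,0] = T y z x := by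
  ext i j; fin_cases i <;> fin_cases j <;> simp [T]

lemma swapT_eq (x y z : ℤ) :
    (T x y z).submatrix ![1,0,2] ![1,0,2] = T (-x) (-z) (-y) := by
  ext i j; fin_cases i <;> fin_cases j <;> simp [T]

lemma fmt_rotT {x y z : ℤ} (h : FiniteMutationType (T x y z)) :
    FiniteMutationType (T y z x) := by
  have := fmt_submatrix h ![1,2,0] (by decide)
  rwa [rotT_eq] at this

lemma fmt_negT {x y z : ℤ} (h : FiniteMutationType (T x y z)) :
    FiniteMutationType (T (-x) (-y) (-z)) := by
  have := fmt_neg h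
  rwa [negT] at this

lemma fmt_swapT {x y z : ℤ} (h : FiniteMutationType (T x y z)) :
    FiniteMutationType (T x z y) := by
  have h2 := fmt_neg (fmt_submatrix h ![1,0,2] (by decide))
  rwa [swapT_eq, negT, neg_neg, neg_neg, neg_neg] at h2

lemma mu1 (x y z : ℤ) (hx : 0 < x) (hy : 0 < y) :
    mutate (T x y z) 1 = T (-x) (-y) (z - x*y) := by
  have hs : Int.sign x = 1 := Int.sign_eq_one_iff_pos.mpr hx
  have hsy : Int.sign (-y) = -1 := by rw [Int.sign_eq_neg_one_iff_neg]; omega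
  ext i j
  fin_cases i <;> fin_cases j <;> simp [mutate, T, hs, hsy] <;>
    first
      | positivity
      | (rw [max_eq_left (by positivity)]; ring)
      | (rw [max_eq_right (by nlinarith : _ ≤ (0:ℤ))]; ring)

lemma mu0neg (X Y Z : ℤ) (hX : X < 0) (hZ : Z < 0) :
    mutate (T X Y Z) 0 = T (-X) (Y + X*Z) (-Z) := by
  have hs : Int.sign (-X) = 1 := Int.sign_eq_one_iff_pos.mpr (by omega)
  have hsz : Int.sign Z = -1 := Int.sign_eq_neg_one_iff_neg.mpr hZ
  ext i j
  fin_cases i <;> fin_cases j <;> simp [mutate, T, hs, hsz] <;>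
    first
      | positivity
      | (rw [max_eq_left (by nlinarith : (0:ℤ) ≤ _)]; ring)
      | (rw [max_eq_right (by nlinarith : _ ≤ (0:ℤ))]; ring)
      | nlinarith

lemma mu2sink (a b c : ℤ) (ha : 0 < a) (hb : 0 < b) (hc : 0 < c) :
    mutate (T a (-b) (-c)) 2 = T (a + b*c) b c := by
  have hs : Int.sign c = 1 := Int.sign_eq_one_iff_pos.mpr hc
  have hsb : Int.sign (-b) = -1 := Int.sign_eq_neg_one_iff_neg.mpr (by omega)
  ext i j
  fin_cases i <;> fin_cases j <;> simp [mutate, T, hs, hsb] <;>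
    first
      | positivity
      | (rw [max_eq_left (by nlinarith : (0:ℤ) ≤ _)]; ring)
      | (rw [max_eq_right (by nlinarith : _ ≤ (0:ℤ))]; ring)
      | nlinarith

def KK (x y z : ℤ) : Prop := 2 ≤ x ∧ 1 ≤ z ∧ z ≤ y ∧ (3 ≤ x ∨ z + 1 ≤ y)

lemma KK_step {x y z : ℤ} (h : KK x y z) :
    mutate (mutate (T x y z) 1) 0 = T x (x*(x*y - z) - y) (x*y - z) ∧
      KK x (x*(x*y - z) - y) (x*y - z) ∧ y + 1 ≤ x*(x*y - z) - y := by
  obtain ⟨hx, hz, hzy, hd⟩ := h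
  have hy : 1 ≤ y := le_trans hz hzy
  have hlt : z < x*y := by nlinarith
  constructor
  · rw [mu1 x y z (by omega) (by omega),
      mu0neg (-x) (-y) (z - x*y) (by omega) (by omega)]
    simp only [neg_neg]
    congr 1 <;> ring
  constructor
  · refine ⟨hx, by nlinarith, by nlinarith, Or.inr ?_⟩
    rcases hd with h3 | hzy1
    · nlinarith
    · nlinarith
  · rcases hd with h3 | hzy1
    · nlinarith
    · nlinarith

noncomputable def gseq (x y z : ℤ) : ℕ → Matrix (Fin 3) (Fin 3) ℤ
  | 0 => T x y z
  | n+1 => mutate (mutate (gseq x y z n) 1) 0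

lemma gseq_form (x y z : ℤ) (h : KK x y z) (n : ℕ) :
    ∃ x' y' z', gseq x y z n = T x' y' z' ∧ KK x' y' z' := by
  induction n with
  | zero => exact ⟨x, y, z, rfl, h⟩
  | succ n ih =>
    obtain ⟨a, b, c, he, hk⟩ := ih
    obtain ⟨heq, hk', _⟩ := KK_step hk
    exact ⟨a, a*(a*b - c) - b, a*b - c, by rw [gseq, he, heq], hk'⟩

lemma gseq_mono (x y z : ℤ) (h : KK x y z) :
    StrictMono (fun n => gseq x y z n 1 2) := by
  apply strictMono_nat_of_lt_succ
  intro n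
  obtain ⟨a, b, c, he, hk⟩ := gseq_form x y z h n
  obtain ⟨heq, _, hgrow⟩ := KK_step hk
  simp only [gseq, he, heq]
  have h1 : T a b c 1 2 = b := by simp [T]
  have h2 : T a (a*(a*b - c) - b) (a*b - c) 1 2 = a*(a*b - c) - b := by simp [T]
  rw [h1, h2]; omega

lemma gseq_mem (x y z : ℤ) (n : ℕ) : ∃ l, gseq x y z n = mutateList (T x y z) l := by
  induction n with
  | zero => exact ⟨[], rfl⟩
  | succ n ih =>
    obtain ⟨l, hl⟩ := ih
    refine ⟨l ++ [1, 0], ?_⟩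
    rw [mutateList_append, ← hl]
    rfl

lemma grow (x y z : ℤ) (h : KK x y z) : ¬ FiniteMutationType (T x y z) := by
  intro hfin
  have hinj : Function.Injective (gseq x y z) := by
    intro a b hab
    have := (gseq_mono x y z h).injective (a₁ := a) (a₂ := b) (by rw [hab])
    exact this
  have hmem : ∀ n, gseq x y z n ∈ {C | MutEquiv (T x y z) C} := by
    intro n
    obtain ⟨l, hl⟩ := gseq_mem x y z n
    rw [hl]; exact mutEquiv_self _ _
  exact (Set.infinite_of_injective_forall_mem hinj hmem) hfin

lemma sink3 (a b c : ℤ) (ha : 0 < a) (hb : 0 < b) (hc : 0 < c)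
    (hh : 2 ≤ a ∨ 2 ≤ b ∨ 2 ≤ c) : ¬ FiniteMutationType (T a (-b) (-c)) := by
  intro hfin
  have h2 := fmt_mutate hfin 2
  rw [mu2sink a b c ha hb hc] at h2
  rcases le_or_gt c b with hcb | hbc
  · refine grow _ _ _ ⟨by nlinarith, hc, hcb, ?_⟩ h2
    rcases lt_or_ge c b with h' | h'
    · exact Or.inr (by omega)
    · have hbc' : b = c := le_antisymm (le_trans h' (le_refl c)) hcb
      refine Or.inl ?_
      rcases hh with h | h | h <;> nlinarith
  · have h3 := fmt_swapT h2
    exact grow _ _ _ ⟨by nlinarith, hb, hbc.le, Or.inr (by omega)⟩ h3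

lemma base3 (x y z : ℤ) (hx : x ≠ 0) (hy : y ≠ 0) (hz : z ≠ 0)
    (hmix1 : ¬(0 < x ∧ 0 < y ∧ 0 < z)) (hmix2 : ¬(x < 0 ∧ y < 0 ∧ z < 0))
    (hh : 2 ≤ |x| ∨ 2 ≤ |y| ∨ 2 ≤ |z|) : ¬ FiniteMutationType (T x y z) := by
  intro hfin
  have habs : ∀ u : ℤ, u ≠ 0 → 0 < u ∨ 0 < -u := by intro u hu; omega
  have hh' : (2 ≤ x ∨ 2 ≤ -x) ∨ (2 ≤ y ∨ 2 ≤ -y) ∨ (2 ≤ z ∨ 2 ≤ -z) := by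
    rcases hh with h|h|h
    exacts [Or.inl (le_abs.mp h), Or.inr (Or.inl (le_abs.mp h)), Or.inr (Or.inr (le_abs.mp h))]
  -- helper to finish from a sink form
  have fin : ∀ a b c : ℤ, 0 < a → 0 < b → 0 < c → (2 ≤ a ∨ 2 ≤ b ∨ 2 ≤ c) →
      FiniteMutationType (T a (-b) (-c)) → False := fun a b c h1 h2 h3 h4 h5 =>
    sink3 a b c h1 h2 h3 h4 h5
  rcases habs x hx with px | nx <;> rcases habs y hy with py | ny <;>
    rcases habs z hz with pz | nz
  · exact hmix1 ⟨px, py, pz⟩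
  · -- (+,+,-) : neg then rot twice
    have h1 := fmt_rotT (fmt_rotT (fmt_negT hfin))
    -- T (-z) (-x) (-y) : pattern (+,-,-) with a = -z
    exact fin (-z) x y nz px py (by rcases hh' with (h|h)|(h|h)|(h|h) <;> omega)
      (by rw [show (-x) = -(x:ℤ) by ring, show (-y) = -(y:ℤ) by ring] at h1 ⊢; exact h1)
  · -- (+,-,+) : neg then rot
    have h1 := fmt_rotT (fmt_negT hfin)
    -- T (-y) (-z) (-x) : a = -y > 0, pattern (+,-,-)
    exact fin (-y) z x ny pz px (by rcases hh' with (h|h)|(h|h)|(h|h) <;> omega) h1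
  · -- (+,-,-) : direct
    have h1 : FiniteMutationType (T x (-(-y)) (-(-z))) := by simpa using hfin
    exact fin x (-y) (-z) px ny nz (by rcases hh' with (h|h)|(h|h)|(h|h) <;> omega) h1
  · -- (-,+,+) : neg
    have h1 := fmt_negT hfin
    exact fin (-x) y z nx py pz (by rcases hh' with (h|h)|(h|h)|(h|h) <;> omega) h1
  · -- (-,+,-) : rot
    have h1 := fmt_rotT hfin
    exact fin y (-z) (-x) py nz nx (by rcases hh' with (h|h)|(h|h)|(h|h) <;> omega)
      (by simpa using h1)
  · -- (-,-,+) : rot twice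
    have h1 := fmt_rotT (fmt_rotT hfin)
    exact fin z (-x) (-y) pz nx ny (by rcases hh' with (h|h)|(h|h)|(h|h) <;> omega)
      (by simpa using h1)
  · exact hmix2 ⟨by omega, by omega, by omega⟩

def Cyc (M : ℕ) (w : Fin M → ℤ) : Matrix (Fin M) (Fin M) ℤ :=
  Matrix.of fun i j =>
    if j.val = (i.val + 1) % M then w i
    else if i.val = (j.val + 1) % M then -(w j) else 0

lemma Cyc3_eq_T (w : Fin 3 → ℤ) : Cyc 3 w = T (w 0) (w 1) (w 2) := by
  ext i j; fin_cases i <;> fin_cases j <;> simp [Cyc, T]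

lemma cyc_rot (M : ℕ) [NeZero M] (w : Fin M → ℤ) (r : Fin M) :
    (Cyc M w).submatrix (fun i => i + r) (fun i => i + r) = Cyc M (fun i => w (i + r)) := by
  have hM : 0 < M := Nat.pos_of_ne_zero (NeZero.ne M)
  have key : ∀ a b : Fin M,
      ((b.val + r.val) % M = ((a.val + r.val) % M + 1) % M) ↔ (b.val = (a.val + 1) % M) := by
    intro a b
    rw [Nat.mod_add_mod]
    constructor
    · intro h
      have h' : b.val + r.val ≡ (a.val + 1) + r.val [MOD M] := by
        unfold Nat.ModEq
        rw [h]; ring_nf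
      have h2 := Nat.ModEq.add_right_cancel' r.val h'
      unfold Nat.ModEq at h2
      rwa [Nat.mod_eq_of_lt b.isLt] at h2
    · intro h
      have h' : b.val ≡ a.val + 1 [MOD M] := by
        unfold Nat.ModEq
        rw [Nat.mod_eq_of_lt b.isLt]; exact h
      have h2 := Nat.ModEq.add_right r.val h'
      unfold Nat.ModEq at h2
      rw [h2]; ring_nf
  ext i j
  simp only [Cyc, Matrix.submatrix_apply, Matrix.of_apply, Fin.val_add]
  rw [if_congr (key i j) rfl (if_congr (key j i) rfl rfl)]

lemma cyc_apply (M : ℕ) (w : Fin M → ℤ) (i j : Fin M) :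
    Cyc M w i j = if j.val = (i.val + 1) % M then w i
      else if i.val = (j.val + 1) % M then -(w j) else 0 := rfl

section FlipContract

variable (m : ℕ) (hm : 3 ≤ m) (w : Fin (m+1) → ℤ) (u v : Fin (m+1))
  (hu : u.val = m - 1) (hv : v.val = m)

include hm hu hv

lemma cyc_iv (i : Fin (m+1)) (hi : i ≠ v) :
    Cyc (m+1) w i v = if i = u then w u else if i.val = 0 then -(w v) else 0 := by
  have hlt : i.val < m + 1 := i.isLt
  have hne : i.val ≠ m := fun h => hi (Fin.ext (by omega))
  have smod : (i.val + 1) % (m+1) = i.val + 1 := Nat.mod_eq_of_lt (by omega)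
  have vmod : (v.val + 1) % (m+1) = 0 := by rw [hv]; exact Nat.mod_self _
  rw [cyc_apply, smod, vmod]
  by_cases h1 : i = u
  · subst h1
    rw [if_pos (by omega), if_pos rfl]
  · rw [if_neg (fun h : v.val = i.val + 1 => h1 (Fin.ext (by omega))), if_neg h1]

lemma cyc_vj (j : Fin (m+1)) (hj : j ≠ v) :
    Cyc (m+1) w v j = if j.val = 0 then w v else if j = u then -(w u) else 0 := by
  have hlt : j.val < m + 1 := j.isLt
  have hne : j.val ≠ m := fun h => hj (Fin.ext (by omega))
  have smod : (j.val + 1) % (m+1) = j.val + 1 := Nat.mod_eq_of_lt (by omega)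
  have vmod : (v.val + 1) % (m+1) = 0 := by rw [hv]; exact Nat.mod_self _
  rw [cyc_apply, vmod]
  by_cases h0 : j.val = 0
  · rw [if_pos h0, if_pos h0]
  · rw [if_neg h0, if_neg h0]
    rw [smod]
    by_cases h1 : j = u
    · subst h1
      rw [if_pos (by omega), if_pos rfl]
    · rw [if_neg (fun h : v.val = j.val + 1 => h1 (Fin.ext (by omega))), if_neg h1]

end FlipContract

section FlipContract2

variable {m : ℕ} {w : Fin (m+1) → ℤ} {u v : Fin (m+1)}

lemma extra_zero (hm : 3 ≤ m) (hu : u.val = m - 1) (hv : v.val = m)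
    (hneg : w u * w v < 0) (i j : Fin (m+1)) (hi : i ≠ v) (hj : j ≠ v) :
    Int.sign (Cyc (m+1) w i v) * max (Cyc (m+1) w i v * Cyc (m+1) w v j) 0 = 0 := by
  rw [cyc_iv m hm w u v hu hv i hi, cyc_vj m hm w u v hu hv j hj]
  by_cases hiu : i = u
  · rw [if_pos hiu]
    by_cases hj0 : j.val = 0
    · rw [if_pos hj0, max_eq_right hneg.le, mul_zero]
    · rw [if_neg hj0]
      by_cases hju : j = u
      · rw [if_pos hju, max_eq_right (by nlinarith [sq_nonneg (w u)] : w u * -(w u) ≤ 0), mul_zero]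
      · rw [if_neg hju, mul_zero, max_self, mul_zero]
  · rw [if_neg hiu]
    by_cases hi0 : i.val = 0
    · rw [if_pos hi0]
      by_cases hj0 : j.val = 0
      · rw [if_pos hj0, max_eq_right (by nlinarith [sq_nonneg (w v)] : -(w v) * w v ≤ 0), mul_zero]
      · rw [if_neg hj0]
        by_cases hju : j = u
        · rw [if_pos hju, max_eq_right (by nlinarith : -(w v) * -(w u) ≤ 0), mul_zero]
        · rw [if_neg hju, mul_zero, max_self, mul_zero]
    · rw [if_neg hi0, Int.sign_zero, zero_mul]

lemma flip_last (hm : 3 ≤ m) (hu : u.val = m - 1) (hv : v.val = m)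
    (hneg : w u * w v < 0) :
    mutate (Cyc (m+1) w) v =
      Cyc (m+1) (fun i => if i = u ∨ i = v then -(w i) else w i) := by
  have huv : u ≠ v := fun h => by rw [h, hv] at hu; omega
  ext i j
  show (if i = v ∨ j = v then -(Cyc (m+1) w i j)
      else Cyc (m+1) w i j + Int.sign (Cyc (m+1) w i v) * max (Cyc (m+1) w i v * Cyc (m+1) w v j) 0)
    = Cyc (m+1) (fun i => if i = u ∨ i = v then -(w i) else w i) i j
  by_cases hiv : i = v
  · rw [hiv, if_pos (Or.inl rfl)]
    by_cases hjv : j = v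
    · rw [hjv, cyc_apply, cyc_apply]
      have hnc : ¬ (v.val = (v.val + 1) % (m+1)) := by
        rw [hv, show (m + 1) % (m + 1) = 0 from Nat.mod_self _]
        omega
      simp only [if_neg hnc]
      rw [neg_zero]
    · rw [cyc_vj m hm w u v hu hv j hjv, cyc_apply]
      have vmod : (v.val + 1) % (m+1) = 0 := by rw [hv]; exact Nat.mod_self _
      rw [vmod]
      by_cases hj0 : j.val = 0
      · rw [if_pos hj0, if_pos hj0, if_pos (Or.inr rfl)]
      · rw [if_neg hj0, if_neg hj0]
        have hsm : (j.val + 1) % (m+1) = j.val + 1 := by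
          have : j.val ≠ m := fun h => hjv (Fin.ext (by omega))
          exact Nat.mod_eq_of_lt (by have := j.isLt; omega)
        rw [hsm]
        by_cases hju : j = u
        · have hjval : j.val = m - 1 := by rw [hju, hu]
          rw [if_pos hju, if_pos (by omega : v.val = j.val + 1), if_pos (Or.inl hju),
            neg_neg, neg_neg, hju]
        · rw [if_neg hju, if_neg (fun h : v.val = j.val + 1 => hju (Fin.ext (by omega))),
            neg_zero]
  · by_cases hjv : j = v
    · rw [hjv, if_pos (Or.inr rfl)]
      rw [cyc_iv m hm w u v hu hv i hiv, cyc_apply]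
      have vmod : (v.val + 1) % (m+1) = 0 := by rw [hv]; exact Nat.mod_self _
      have hsm : (i.val + 1) % (m+1) = i.val + 1 := by
        have : i.val ≠ m := fun h => hiv (Fin.ext (by omega))
        exact Nat.mod_eq_of_lt (by have := i.isLt; omega)
      rw [vmod, hsm]
      by_cases hiu : i = u
      · have hival : i.val = m - 1 := by rw [hiu, hu]
        rw [if_pos hiu, if_pos (by omega : v.val = i.val + 1), if_pos (Or.inl hiu), hiu]
      · rw [if_neg hiu, if_neg (fun h : v.val = i.val + 1 => hiu (Fin.ext (by omega)))]
        by_cases hi0 : i.val = 0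
        · rw [if_pos hi0, if_pos hi0, if_pos (Or.inr rfl), neg_neg]
        · rw [if_neg hi0, if_neg hi0, neg_zero]
    · rw [if_neg (by tauto)]
      rw [extra_zero hm hu hv hneg i j hiv hjv, add_zero]
      rw [cyc_apply, cyc_apply]
      by_cases hadj : j.val = (i.val + 1) % (m+1)
      · rw [if_pos hadj, if_pos hadj]
        have : ¬ (i = u ∨ i = v) := by
          rintro (h | h)
          · subst h
            apply hjv
            apply Fin.ext
            rw [hadj, hu, hv]
            rw [show m - 1 + 1 = m by omega, Nat.mod_eq_of_lt (by omega)]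
          · exact hiv h
        rw [if_neg this]
      · rw [if_neg hadj, if_neg hadj]
        by_cases hadj2 : i.val = (j.val + 1) % (m+1)
        · rw [if_pos hadj2, if_pos hadj2]
          have : ¬ (j = u ∨ j = v) := by
            rintro (h | h)
            · subst h
              apply hiv
              apply Fin.ext
              rw [hadj2, hu, hv]
              rw [show m - 1 + 1 = m by omega, Nat.mod_eq_of_lt (by omega)]
            · exact hjv h
          rw [if_neg this]
        · rw [if_neg hadj2, if_neg hadj2]

end FlipContract2

lemma sign_eq_of_mul_pos {p q : ℤ} (h : 0 < p * q) : Int.sign p = Int.sign q := by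
  rcases lt_trichotomy p 0 with hp | hp | hp
  · have hq : q < 0 := by nlinarith
    rw [Int.sign_eq_neg_one_iff_neg.mpr hp, Int.sign_eq_neg_one_iff_neg.mpr hq]
  · rw [hp] at h; simp at h
  · have hq : 0 < q := by nlinarith
    rw [Int.sign_eq_one_iff_pos.mpr hp, Int.sign_eq_one_iff_pos.mpr hq]

section Contract

variable {m : ℕ} {w : Fin (m+1) → ℤ} {u v : Fin (m+1)}

lemma contract_last (hm : 3 ≤ m) (hu : u.val = m - 1) (hv : v.val = m)
    (hpos : 0 < w u * w v) :
    (mutate (Cyc (m+1) w) v).submatrix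
      (fun i : Fin m => (⟨i.val, Nat.lt_succ_of_lt i.isLt⟩ : Fin (m+1)))
      (fun i : Fin m => (⟨i.val, Nat.lt_succ_of_lt i.isLt⟩ : Fin (m+1))) =
    Cyc m (fun i => if i.val = m - 1 then Int.sign (w u) * (w u * w v)
      else w ⟨i.val, Nat.lt_succ_of_lt i.isLt⟩) := by
  ext i j
  set i' : Fin (m+1) := ⟨i.val, Nat.lt_succ_of_lt i.isLt⟩ with hi'def
  set j' : Fin (m+1) := ⟨j.val, Nat.lt_succ_of_lt j.isLt⟩ with hj'def
  have hi2 : i.val < m := i.isLt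
  have hj2 : j.val < m := j.isLt
  have hiv : i' ≠ v := fun h => by
    have h2 : i.val = v.val := congrArg Fin.val h
    omega
  have hjv : j' ≠ v := fun h => by
    have h2 : j.val = v.val := congrArg Fin.val h
    omega
  show (if i' = v ∨ j' = v then -(Cyc (m+1) w i' j')
      else Cyc (m+1) w i' j' +
        Int.sign (Cyc (m+1) w i' v) * max (Cyc (m+1) w i' v * Cyc (m+1) w v j') 0)
    = Cyc m _ i j
  rw [if_neg (not_or.mpr ⟨hiv, hjv⟩)]
  rw [cyc_iv m hm w u v hu hv i' hiv, cyc_vj m hm w u v hu hv j' hjv]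
  rw [cyc_apply, cyc_apply]
  have hiuP : (i' = u) = (i.val = m - 1) := propext
    ⟨fun h => by have h2 : i.val = u.val := congrArg Fin.val h; omega,
     fun h => Fin.ext (show i.val = u.val by omega)⟩
  have hjuP : (j' = u) = (j.val = m - 1) := propext
    ⟨fun h => by have h2 : j.val = u.val := congrArg Fin.val h; omega,
     fun h => Fin.ext (show j.val = u.val by omega)⟩
  have em1 : (i'.val + 1) % (m+1) = i.val + 1 := Nat.mod_eq_of_lt (by omega)
  have em2 : (j'.val + 1) % (m+1) = j.val + 1 := Nat.mod_eq_of_lt (by omega)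
  have e1 : (i.val + 1) % m = if i.val = m - 1 then 0 else i.val + 1 := by
    by_cases h : i.val = m - 1
    · rw [if_pos h, show i.val + 1 = m by omega]; exact Nat.mod_self _
    · rw [if_neg h]; exact Nat.mod_eq_of_lt (by omega)
  have e2 : (j.val + 1) % m = if j.val = m - 1 then 0 else j.val + 1 := by
    by_cases h : j.val = m - 1
    · rw [if_pos h, show j.val + 1 = m by omega]; exact Nat.mod_self _
    · rw [if_neg h]; exact Nat.mod_eq_of_lt (by omega)
  simp only [em1, em2, e1, e2, hiuP, hjuP]
  have hi'v : i'.val = i.val := rfl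
  have hj'v : j'.val = j.val := rfl
  split_ifs <;>
    first
      | rfl
      | omega
      | (rw [max_eq_left hpos.le]; try ring)
      | (rw [max_eq_right (by nlinarith [sq_nonneg (w u)] : w u * -(w u) ≤ 0)]; try ring)
      | (rw [max_eq_right (by nlinarith [sq_nonneg (w v)] : -(w v) * w v ≤ 0)]; try ring)
      | (rw [neg_mul_neg, max_eq_left (by nlinarith : (0:ℤ) ≤ w v * w u), Int.sign_neg,
          ← sign_eq_of_mul_pos hpos]; try ring)
      | (simp only [mul_zero, zero_mul, max_self, Int.sign_zero, add_zero, zero_add, neg_neg]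
         ; try first | rfl | omega)

end Contract

lemma chord_eq {p q : ℤ} (h : 0 < p * q) : Int.sign p * (p * q) = |p| * q := by
  rcases lt_trichotomy p 0 with hp | hp | hp
  · rw [Int.sign_eq_neg_one_iff_neg.mpr hp, abs_of_neg hp]; ring
  · subst hp; simp at h
  · rw [Int.sign_eq_one_iff_pos.mpr hp, abs_of_pos hp]; ring

lemma fin3_cases (i : Fin 3) : i = 0 ∨ i = 1 ∨ i = 2 := by
  have h := i.isLt
  rcases Nat.lt_or_ge i.val 1 with h1 | h1
  · exact Or.inl (Fin.ext (show i.val = 0 by omega))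
  rcases Nat.lt_or_ge i.val 2 with h2 | h2
  · exact Or.inr (Or.inl (Fin.ext (show i.val = 1 by omega)))
  · exact Or.inr (Or.inr (Fin.ext (show i.val = 2 by omega)))

lemma step_main (m : ℕ) (hm : 3 ≤ m)
    (IH : ∀ w : Fin m → ℤ, (∀ i, w i ≠ 0) → (∃ i, 0 < w i) → (∃ i, w i < 0) →
      (∃ i, 2 ≤ |w i|) → ¬ FiniteMutationType (Cyc m w))
    (w : Fin (m+1) → ℤ) (h0 : ∀ i, w i ≠ 0) (hp : ∃ i, 0 < w i) (hn : ∃ i, w i < 0)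
    (hh : ∃ i, 2 ≤ |w i|) (hflow : ∃ k, 0 < w k * w (k+1)) :
    ¬ FiniteMutationType (Cyc (m+1) w) := by
  intro hfin
  obtain ⟨k, hk⟩ := hflow
  haveI : NeZero (m+1) := ⟨by omega⟩
  set u : Fin (m+1) := ⟨m-1, by omega⟩ with hudef
  set v : Fin (m+1) := ⟨m, by omega⟩ with hvdef
  set r : Fin (m+1) := k - u with hr
  have hur : u + r = k := (add_comm u r).trans (sub_add_cancel k u)
  have hone : (1 : Fin (m+1)).val = 1 := by
    rw [Fin.val_one']; exact Nat.mod_eq_of_lt (by omega)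
  have hvu : v = u + 1 := by
    apply Fin.ext
    rw [Fin.val_add, hone]
    show m = (m - 1 + 1) % (m+1)
    rw [show m - 1 + 1 = m by omega]
    exact (Nat.mod_eq_of_lt (by omega)).symm
  have hvr : v + r = k + 1 :=
    (congrArg (· + r) hvu).trans ((add_right_comm u 1 r).trans (congrArg (· + 1) hur))
  set w1 : Fin (m+1) → ℤ := fun i => w (i + r) with hw1
  have hrot : FiniteMutationType (Cyc (m+1) w1) := by
    have h2 := fmt_submatrix hfin (fun i => i + r) (add_left_injective r)
    rwa [cyc_rot] at h2
  have hflow1 : 0 < w1 u * w1 v := by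
    show 0 < w (u + r) * w (v + r)
    rw [hur, hvr]; exact hk
  have h1ne : ∀ t : Fin (m+1), w1 t ≠ 0 := fun t => h0 (t + r)
  have h3 := fmt_mutate hrot v
  have h4 := fmt_submatrix h3
      (fun i : Fin m => (⟨i.val, Nat.lt_succ_of_lt i.isLt⟩ : Fin (m+1)))
      (fun a b hab => by simpa [Fin.ext_iff] using hab)
  rw [contract_last hm rfl rfl hflow1] at h4
  have habsu : 1 ≤ |w1 u| := by
    have := h1ne u; rcases lt_trichotomy (w1 u) 0 with h|h|h <;> simp [abs] <;> omega
  have habsv : 1 ≤ |w1 v| := by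
    have := h1ne v; rcases lt_trichotomy (w1 v) 0 with h|h|h <;> simp [abs] <;> omega
  have hchord : Int.sign (w1 u) * (w1 u * w1 v) = |w1 u| * w1 v := chord_eq hflow1
  -- the contracted weight function
  set w2 : Fin m → ℤ := fun i => if i.val = m - 1 then Int.sign (w1 u) * (w1 u * w1 v)
      else w1 ⟨i.val, Nat.lt_succ_of_lt i.isLt⟩ with hw2
  have hw2last : w2 ⟨m-1, by omega⟩ = |w1 u| * w1 v := by
    rw [hw2]; simp only [if_pos rfl]; exact hchord
  have hw2small : ∀ i : Fin m, i.val ≠ m - 1 → w2 i = w1 ⟨i.val, Nat.lt_succ_of_lt i.isLt⟩ := by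
    intro i hi; rw [hw2]; simp only [if_neg hi]
  refine IH w2 ?_ ?_ ?_ ?_ h4
  · -- nonzero
    intro i
    by_cases hi : i.val = m - 1
    · have : i = ⟨m-1, by omega⟩ := Fin.ext hi
      rw [this, hw2last]
      have := h1ne v
      intro hz
      rcases mul_eq_zero.mp hz with h|h
      · omega
      · exact h1ne v h
    · rw [hw2small i hi]; exact h1ne _
  · -- exists positive
    by_contra hnp
    push_neg at hnp
    have hallneg : ∀ t : Fin (m+1), w1 t < 0 := by
      have hvneg : w1 v < 0 := by
        have h1 := hnp ⟨m-1, by omega⟩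
        rw [hw2last] at h1
        have hv0 : w1 v ≤ 0 := by nlinarith
        exact lt_of_le_of_ne hv0 (h1ne v)
      have huneg : w1 u < 0 := by
        by_contra hcon
        push_neg at hcon
        nlinarith
      intro t
      by_cases ht : t.val ≤ m - 2
      · have h1 := hnp ⟨t.val, by omega⟩
        rw [hw2small ⟨t.val, by omega⟩ (by simp; omega)] at h1
        have heq : (⟨(⟨t.val, by omega⟩ : Fin m).val, Nat.lt_succ_of_lt (Fin.isLt _)⟩ : Fin (m+1)) = t :=
          Fin.ext rfl
        rw [heq] at h1
        exact lt_of_le_of_ne h1 (h1ne t)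
      · have : t = u ∨ t = v := by
          have := t.isLt
          rcases Nat.lt_or_ge t.val m with h|h
          · exact Or.inl (Fin.ext (show t.val = m - 1 by omega))
          · exact Or.inr (Fin.ext (show t.val = m by omega))
        rcases this with h|h
        · rw [h]; exact huneg
        · rw [h]; exact hvneg
    obtain ⟨i0, hi0⟩ := hp
    have h5 : w ((i0 - r) + r) < 0 := hallneg (i0 - r)
    rw [sub_add_cancel] at h5
    omega
  · -- exists negative
    by_contra hnn
    push_neg at hnn
    have hallpos : ∀ t : Fin (m+1), 0 < w1 t := by
      have hvpos : 0 < w1 v := by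
        have h1 := hnn ⟨m-1, by omega⟩
        rw [hw2last] at h1
        have hv0 : 0 ≤ w1 v := by nlinarith
        exact lt_of_le_of_ne hv0 (Ne.symm (h1ne v))
      have hupos : 0 < w1 u := by
        by_contra hcon
        push_neg at hcon
        nlinarith
      intro t
      by_cases ht : t.val ≤ m - 2
      · have h1 := hnn ⟨t.val, by omega⟩
        rw [hw2small ⟨t.val, by omega⟩ (by simp; omega)] at h1
        have heq : (⟨(⟨t.val, by omega⟩ : Fin m).val, Nat.lt_succ_of_lt (Fin.isLt _)⟩ : Fin (m+1)) = t :=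
          Fin.ext rfl
        rw [heq] at h1
        exact lt_of_le_of_ne h1 (Ne.symm (h1ne t))
      · have : t = u ∨ t = v := by
          have := t.isLt
          rcases Nat.lt_or_ge t.val m with h|h
          · exact Or.inl (Fin.ext (show t.val = m - 1 by omega))
          · exact Or.inr (Fin.ext (show t.val = m by omega))
        rcases this with h|h
        · rw [h]; exact hupos
        · rw [h]; exact hvpos
    obtain ⟨i0, hi0⟩ := hn
    have h5 : 0 < w ((i0 - r) + r) := hallpos (i0 - r)
    rw [sub_add_cancel] at h5
    omega
  · -- heavy
    obtain ⟨t0, ht0⟩ := hh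
    have ht1 : 2 ≤ |w1 (t0 - r)| := by
      show 2 ≤ |w ((t0 - r) + r)|
      rw [sub_add_cancel]; exact ht0
    generalize t0 - r = t at ht1
    by_cases ht : t.val ≤ m - 2
    · refine ⟨⟨t.val, by omega⟩, ?_⟩
      rw [hw2small ⟨t.val, by omega⟩ (by simp; omega)]
      have heq : (⟨(⟨t.val, by omega⟩ : Fin m).val, Nat.lt_succ_of_lt (Fin.isLt _)⟩ : Fin (m+1)) = t :=
        Fin.ext rfl
      rw [heq]; exact ht1
    · refine ⟨⟨m-1, by omega⟩, ?_⟩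
      rw [hw2last, abs_mul, abs_abs]
      have : t = u ∨ t = v := by
        have := t.isLt
        rcases Nat.lt_or_ge t.val m with h|h
        · exact Or.inl (Fin.ext (show t.val = m - 1 by omega))
        · exact Or.inr (Fin.ext (show t.val = m by omega))
      rcases this with h|h
      · rw [h] at ht1; nlinarith
      · rw [h] at ht1; nlinarith

lemma cycle_infinite : ∀ m, 3 ≤ m → ∀ w : Fin m → ℤ,
    (∀ i, w i ≠ 0) → (∃ i, 0 < w i) → (∃ i, w i < 0) → (∃ i, 2 ≤ |w i|) →
    ¬ FiniteMutationType (Cyc m w) := by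
  intro m hm
  induction m, hm using Nat.le_induction with
  | base =>
    intro w h0 hp hn hh hfin
    rw [Cyc3_eq_T] at hfin
    refine base3 (w 0) (w 1) (w 2) (h0 0) (h0 1) (h0 2) ?_ ?_ ?_ hfin
    · rintro ⟨a, b, c⟩
      obtain ⟨i, hi⟩ := hn
      rcases fin3_cases i with rfl | rfl | rfl <;> omega
    · rintro ⟨a, b, c⟩
      obtain ⟨i, hi⟩ := hp
      rcases fin3_cases i with rfl | rfl | rfl <;> omega
    · obtain ⟨i, hi⟩ := hh
      rcases fin3_cases i with rfl | rfl | rfl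
      · exact Or.inl hi
      · exact Or.inr (Or.inl hi)
      · exact Or.inr (Or.inr hi)
  | succ m hm IH =>
    intro w h0 hp hn hh hfin
    haveI : NeZero (m+1) := ⟨by omega⟩
    by_cases halt : ∀ k : Fin (m+1), w k * w (k+1) < 0
    · set u : Fin (m+1) := ⟨m-1, by omega⟩ with hudef
      set v : Fin (m+1) := ⟨m, by omega⟩ with hvdef
      have hone : (1 : Fin (m+1)).val = 1 := by
        rw [Fin.val_one']; exact Nat.mod_eq_of_lt (by omega)
      have hvu : v = u + 1 := by
        apply Fin.ext
        rw [Fin.val_add, hone]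
        show m = (m - 1 + 1) % (m+1)
        rw [show m - 1 + 1 = m by omega]
        exact (Nat.mod_eq_of_lt (by omega)).symm
      have hneg : w u * w v < 0 := by rw [hvu]; exact halt u
      have h2 := fmt_mutate hfin v
      rw [flip_last hm rfl rfl hneg] at h2
      set wf : Fin (m+1) → ℤ := fun i => if i = u ∨ i = v then -(w i) else w i with hwf
      have hfu : wf u = -(w u) := if_pos (Or.inl rfl)
      have hfv : wf v = -(w v) := if_pos (Or.inr rfl)
      have hv1 : v + 1 = (0 : Fin (m+1)) := by
        apply Fin.ext
        rw [Fin.val_add, hone]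
        show (m + 1) % (m+1) = 0
        exact Nat.mod_self _
      have hf0 : wf 0 = w 0 := by
        refine if_neg ?_
        rintro (h|h)
        · have h2 : (0 : Fin (m+1)).val = u.val := congrArg Fin.val h
          have h3 : (0 : Fin (m+1)).val = 0 := rfl
          rw [h3] at h2
          have h4 : u.val = m - 1 := rfl
          omega
        · have h2 : (0 : Fin (m+1)).val = v.val := congrArg Fin.val h
          have h3 : (0 : Fin (m+1)).val = 0 := rfl
          rw [h3] at h2
          have h4 : v.val = m := rfl
          omega
      refine step_main m hm IH wf ?_ ?_ ?_ ?_ ?_ h2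
      · intro i
        rw [hwf]
        simp only []
        split_ifs
        · simp [h0 i]
        · exact h0 i
      · rcases lt_trichotomy (w u) 0 with h|h|h
        · exact ⟨u, by rw [hfu]; omega⟩
        · exact absurd h (h0 u)
        · exact ⟨v, by rw [hfv]; nlinarith⟩
      · rcases lt_trichotomy (w u) 0 with h|h|h
        · exact ⟨v, by rw [hfv]; nlinarith⟩
        · exact absurd h (h0 u)
        · exact ⟨u, by rw [hfu]; omega⟩
      · obtain ⟨t, ht⟩ := hh
        refine ⟨t, ?_⟩
        rw [hwf]
        simp only []
        split_ifs
        · rwa [abs_neg]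
        · exact ht
      · refine ⟨v, ?_⟩
        rw [hv1, hfv, hf0]
        have := halt v
        rw [hv1] at this
        nlinarith
    · push_neg at halt
      obtain ⟨k, hk⟩ := halt
      have : 0 < w k * w (k+1) :=
        lt_of_le_of_ne hk (Ne.symm (mul_ne_zero (h0 k) (h0 (k+1))))
      exact step_main m hm IH w h0 hp hn hh ⟨k, this⟩ hfin

/-- a non-oriented cycle which is not simply-laced is of infinite
mutation type. -/
theorem stmt2 {m : ℕ} (B : Matrix (Fin m) (Fin m) ℤ) (hB : IsSkewQ B)
    (hcyc : IsNonOrientedCycleMat B) (hw : ∃ i j, 2 ≤ |B i j|) :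
    ¬ FiniteMutationType B := by
  intro hfin
  obtain ⟨⟨hm, ρ, hadj⟩, hnor⟩ := hcyc
  haveI : NeZero m := ⟨by omega⟩
  have hcval : ∀ i : Fin m, ((i.val : ZMod m)).val = i.val :=
    fun i => ZMod.val_cast_of_lt i.isLt
  have hcsurj : ∀ x : ZMod m, ((ZMod.val x : ℕ) : ZMod m) = x :=
    fun x => ZMod.natCast_rightInverse x
  have hmodcast : ∀ a : ℕ, ((a % m : ℕ) : ZMod m) = (a : ZMod m) := by
    intro a
    conv_rhs => rw [← Nat.mod_add_div a m]
    push_cast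
    rw [ZMod.natCast_self]
    ring
  have hsucc : ∀ i : Fin m, (((i.val + 1) % m : ℕ) : ZMod m) = (i.val : ZMod m) + 1 := by
    intro i
    rw [hmodcast]
    push_cast
    ring
  -- the weight function and embedding
  set w : Fin m → ℤ := fun i => B (ρ (i.val : ZMod m)) (ρ ((i.val : ZMod m) + 1)) with hwdef
  set e : Fin m → Fin m := fun i => ρ (i.val : ZMod m) with hedef
  have heinj : Function.Injective e := by
    intro a b hab
    have h2 : ((a.val : ZMod m)) = ((b.val : ZMod m)) := ρ.injective hab
    have h3 := congrArg ZMod.val h2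
    rw [hcval a, hcval b] at h3
    exact Fin.ext h3
  have hweq : ∀ x : ZMod m, w ⟨x.val, ZMod.val_lt x⟩ = B (ρ x) (ρ (x + 1)) := by
    intro x
    show B (ρ ((x.val : ℕ) : ZMod m)) (ρ (((x.val : ℕ) : ZMod m) + 1)) = _
    rw [hcsurj x]
  have hwne : ∀ i, w i ≠ 0 := fun i => (hadj _ _).mpr (Or.inl rfl)
  have hCyc : Cyc m w = B.submatrix e e := by
    ext i j
    rw [cyc_apply]
    show _ = B (ρ (i.val : ZMod m)) (ρ (j.val : ZMod m))
    by_cases h1 : j.val = (i.val + 1) % m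
    · rw [if_pos h1]
      have h2 : (j.val : ZMod m) = (i.val : ZMod m) + 1 := by
        rw [h1, hsucc i]
      rw [h2]
    · rw [if_neg h1]
      by_cases h2 : i.val = (j.val + 1) % m
      · rw [if_pos h2]
        have h3 : (i.val : ZMod m) = (j.val : ZMod m) + 1 := by
          rw [h2, hsucc j]
        rw [h3, hB]
      · rw [if_neg h2]
        by_contra hne
        rcases (hadj _ _).mp (Ne.symm hne) with h3 | h3
        · apply h1
          rw [← hcval j, h3, ← hsucc i]
          exact ZMod.val_cast_of_lt (Nat.mod_lt _ (by omega))
        · apply h2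
          rw [← hcval i, h3, ← hsucc j]
          exact ZMod.val_cast_of_lt (Nat.mod_lt _ (by omega))
  have hexpos : ∃ i, 0 < w i := by
    by_contra h
    push_neg at h
    have hallneg : ∀ i, w i < 0 := fun i => lt_of_le_of_ne (h i) (hwne i)
    apply hnor
    refine ⟨hm, (Equiv.neg (ZMod m)).trans ρ, ?_, ?_⟩
    · intro i j
      simp only [Equiv.trans_apply, Equiv.neg_apply]
      rw [hadj (-i) (-j)]
      constructor
      · rintro (h4 | h4)
        · exact Or.inr (by linear_combination h4)
        · exact Or.inl (by linear_combination h4)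
      · rintro (h4 | h4)
        · exact Or.inr (by linear_combination h4)
        · exact Or.inl (by linear_combination h4)
    · intro x
      simp only [Equiv.trans_apply, Equiv.neg_apply]
      have h1 : -x = (-x - 1) + 1 := by ring
      have h2 : -(x+1) = -x - 1 := by ring
      rw [h1, h2, hB]
      have h3 := hallneg ⟨(-x-1).val, ZMod.val_lt _⟩
      rw [hweq (-x-1)] at h3
      linarith
  have hexneg : ∃ i, w i < 0 := by
    by_contra h
    push_neg at h
    have hallpos : ∀ i, 0 < w i := fun i => lt_of_le_of_ne (h i) (Ne.symm (hwne i))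
    apply hnor
    refine ⟨hm, ρ, hadj, ?_⟩
    intro x
    have h3 := hallpos ⟨x.val, ZMod.val_lt _⟩
    rwa [hweq x] at h3
  have hheavy : ∃ i, 2 ≤ |w i| := by
    obtain ⟨i0, j0, hij⟩ := hw
    have hne : B i0 j0 ≠ 0 := by
      intro h
      rw [h] at hij
      simp at hij
    have hne2 : B (ρ (ρ.symm i0)) (ρ (ρ.symm j0)) ≠ 0 := by
      rwa [Equiv.apply_symm_apply, Equiv.apply_symm_apply]
    rcases (hadj _ _).mp hne2 with h3 | h3
    · refine ⟨⟨(ρ.symm i0).val, ZMod.val_lt _⟩, ?_⟩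
      rw [hweq (ρ.symm i0), ← h3, Equiv.apply_symm_apply, Equiv.apply_symm_apply]
      exact hij
    · refine ⟨⟨(ρ.symm j0).val, ZMod.val_lt _⟩, ?_⟩
      rw [hweq (ρ.symm j0), ← h3, hB, Equiv.apply_symm_apply, Equiv.apply_symm_apply, abs_neg]
      exact hij
  have h2 : FiniteMutationType (B.submatrix e e) := fmt_submatrix hfin e heinj
  rw [← hCyc] at h2
  exact cycle_infinite m hm w hwne hexpos hexneg hheavy h2
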